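/- Let N, M ≥ 2, h, τ > 0 with τ ≤ h², C_T > 0, and let e : {0,…,M} × {0,…,N} → ℝ, T^{·} : {0,…,M−1} × {0,…,N} → ℝ, p : {1,…,M} → ℝ with p^{k+1} > 0 satisfy the error equation of the Crank–Nicolson scheme: for all 0 ≤ k ≤ M−1 and 1 ≤ i ≤ N−1, (e_i^{k+1} − e_i^k)/τ − (e_{i+1}^{k+1} − 2e_i^{k+1} + e_{i−1}^{k+1} + e_{i+1}^k − 2e_i^k + e_{i−1}^k)/(2h²) + p^{k+1} e_i^{k+1} = T_i^{k+1/2}, with e_0^k = e_N^k = 0 for all k, zero initial error e_i^0 = 0 for all i, and truncation bound max_{0≤i≤N} |T_i^{k+1/2}| ≤ C_T(τ² + h²) for all k. Then for every 0 ≤ k ≤ M: max_{0≤i≤N} |e_i^k| ≤ C_T · (kτ) · (τ² + h²); in particular, if Mτ ≤ T then max_{0≤i≤N} |e_i^k| ≤ C_T T (τ² + h²) for all k. -/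
import Mathlib


open Finset

set_option maxHeartbeats 1000000

/-- Convergence of the Crank–Nicolson scheme: if the error `e` satisfies the error equation
with truncation error bounded by `C_T (τ² + h²)`, zero initial error and homogeneous boundary
values, then `‖e^k‖_∞ ≤ C_T (k τ)(τ² + h²)`; in particular `‖e^k‖_∞ ≤ C_T T (τ² + h²)`
whenever `M τ ≤ T`. -/
theorem crank_nicolson_convergence
    (N M : ℕ) (hN : 2 ≤ N) (hM : 2 ≤ M)
    (h τ : ℝ) (hh : 0 < h) (hτ : 0 < τ) (hτh : τ ≤ h ^ 2)
    (CT : ℝ) (hCT : 0 < CT) (Tf : ℝ)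
    (e Tr : ℕ → ℕ → ℝ) (p : ℕ → ℝ)
    (hp : ∀ k < M, 0 < p (k + 1))
    (errEq : ∀ k < M, ∀ i, 1 ≤ i → i ≤ N - 1 →
      (e (k + 1) i - e k i) / τ -
          (e (k + 1) (i + 1) - 2 * e (k + 1) i + e (k + 1) (i - 1) +
            e k (i + 1) - 2 * e k i + e k (i - 1)) / (2 * h ^ 2) +
          p (k + 1) * e (k + 1) i = Tr k i)
    (hbc : ∀ k ≤ M, e k 0 = 0 ∧ e k N = 0)
    (hinit : ∀ i ≤ N, e 0 i = 0)
    (htrunc : ∀ k < M, ∀ i ≤ N, |Tr k i| ≤ CT * (τ ^ 2 + h ^ 2)) :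
    (∀ k ≤ M,
      Finset.sup' (Finset.range (N + 1)) (Finset.nonempty_range_iff.mpr (Nat.succ_ne_zero N))
          (fun i => |e k i|) ≤ CT * ((k : ℝ) * τ) * (τ ^ 2 + h ^ 2)) ∧
    ((M : ℝ) * τ ≤ Tf →
      ∀ k ≤ M,
        Finset.sup' (Finset.range (N + 1)) (Finset.nonempty_range_iff.mpr (Nat.succ_ne_zero N))
          (fun i => |e k i|) ≤ CT * Tf * (τ ^ 2 + h ^ 2)) := by
  have hne : (Finset.range (N + 1)).Nonempty := Finset.nonempty_range_iff.mpr (Nat.succ_ne_zero N)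
  set S : ℕ → ℝ := fun k =>
    Finset.sup' (Finset.range (N + 1)) (Finset.nonempty_range_iff.mpr (Nat.succ_ne_zero N))
      (fun i => |e k i|) with hSdef
  have hX : (0:ℝ) < τ ^ 2 + h ^ 2 := by positivity
  have hSnn : ∀ k, 0 ≤ S k := by
    intro k
    have h0 : (0:ℕ) ∈ Finset.range (N + 1) := Finset.mem_range.mpr (Nat.succ_pos N)
    have := Finset.le_sup' (fun i => |e k i|) h0
    exact le_trans (abs_nonneg _) this
  have hle : ∀ k i, i ≤ N → |e k i| ≤ S k := by
    intro k i hi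
    exact Finset.le_sup' (fun i => |e k i|) (Finset.mem_range.mpr (Nat.lt_succ_of_le hi))
  have h2 : (0:ℝ) < 2 * h ^ 2 := by positivity
  have step : ∀ k < M, S (k + 1) ≤ S k + τ * (CT * (τ ^ 2 + h ^ 2)) := by
    intro k hk
    obtain ⟨j, hjmem, hje⟩ :=
      Finset.exists_mem_eq_sup' hne (fun i => |e (k + 1) i|)
    have hjN : j ≤ N := Nat.lt_succ_iff.mp (Finset.mem_range.mp hjmem)
    have hB : S (k + 1) = |e (k + 1) j| := hje
    have hRHSnn : 0 ≤ S k + τ * (CT * (τ ^ 2 + h ^ 2)) := by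
      have := hSnn k; positivity
    by_cases hj0 : j = 0
    · rw [hB, hj0, (hbc (k + 1) (by omega)).1, abs_zero]; exact hRHSnn
    by_cases hjNe : j = N
    · rw [hB, hjNe, (hbc (k + 1) (by omega)).2, abs_zero]; exact hRHSnn
    have hj1 : 1 ≤ j := Nat.one_le_iff_ne_zero.mpr hj0
    have hjN1 : j ≤ N - 1 := by omega
    have heq := errEq k hk j hj1 hjN1
    have hτ0 : τ ≠ 0 := ne_of_gt hτ
    have hh0 : h ≠ 0 := ne_of_gt hh
    have key : (2 * h ^ 2 + 2 * τ + 2 * h ^ 2 * τ * p (k + 1)) * e (k + 1) j =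
        τ * (e (k + 1) (j + 1) + e (k + 1) (j - 1) + e k (j + 1) + e k (j - 1)) +
          (2 * h ^ 2 - 2 * τ) * e k j + 2 * h ^ 2 * τ * Tr k j := by
      field_simp at heq
      linarith [heq]
    -- bounds
    have ha1 : |e (k + 1) (j + 1)| ≤ S (k + 1) := hle (k + 1) (j + 1) (by omega)
    have ha2 : |e (k + 1) (j - 1)| ≤ S (k + 1) := hle (k + 1) (j - 1) (by omega)
    have hb1 : |e k (j + 1)| ≤ S k := hle k (j + 1) (by omega)
    have hb2 : |e k (j - 1)| ≤ S k := hle k (j - 1) (by omega)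
    have hb0 : |e k j| ≤ S k := hle k j hjN
    have hTr : |Tr k j| ≤ CT * (τ ^ 2 + h ^ 2) := htrunc k hk j hjN
    have hpk := hp k hk
    have hcoef : (0:ℝ) < 2 * h ^ 2 + 2 * τ + 2 * h ^ 2 * τ * p (k + 1) := by positivity
    have habs : (2 * h ^ 2 + 2 * τ + 2 * h ^ 2 * τ * p (k + 1)) * |e (k + 1) j| ≤
        τ * (|e (k + 1) (j + 1)| + |e (k + 1) (j - 1)| + |e k (j + 1)| + |e k (j - 1)|) +
          (2 * h ^ 2 - 2 * τ) * |e k j| + 2 * h ^ 2 * τ * |Tr k j| := by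
      have h1 : (2 * h ^ 2 + 2 * τ + 2 * h ^ 2 * τ * p (k + 1)) * |e (k + 1) j| =
          |(2 * h ^ 2 + 2 * τ + 2 * h ^ 2 * τ * p (k + 1)) * e (k + 1) j| := by
        rw [abs_mul, abs_of_pos hcoef]
      rw [h1, key]
      have t1 : |τ * (e (k + 1) (j + 1) + e (k + 1) (j - 1) + e k (j + 1) + e k (j - 1))| ≤
          τ * (|e (k + 1) (j + 1)| + |e (k + 1) (j - 1)| + |e k (j + 1)| + |e k (j - 1)|) := by
        rw [abs_mul, abs_of_pos hτ]
        gcongr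
        calc |e (k + 1) (j + 1) + e (k + 1) (j - 1) + e k (j + 1) + e k (j - 1)|
            ≤ |e (k + 1) (j + 1) + e (k + 1) (j - 1) + e k (j + 1)| + |e k (j - 1)| := abs_add_le _ _
          _ ≤ |e (k + 1) (j + 1) + e (k + 1) (j - 1)| + |e k (j + 1)| + |e k (j - 1)| := by
              gcongr; exact abs_add_le _ _
          _ ≤ |e (k + 1) (j + 1)| + |e (k + 1) (j - 1)| + |e k (j + 1)| + |e k (j - 1)| := by
              gcongr; exact abs_add_le _ _
      have t2 : |(2 * h ^ 2 - 2 * τ) * e k j| ≤ (2 * h ^ 2 - 2 * τ) * |e k j| := by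
        rw [abs_mul, abs_of_nonneg (by linarith : (0:ℝ) ≤ 2 * h ^ 2 - 2 * τ)]
      have t3 : |2 * h ^ 2 * τ * Tr k j| ≤ 2 * h ^ 2 * τ * |Tr k j| := by
        rw [abs_mul, abs_of_pos (by positivity : (0:ℝ) < 2 * h ^ 2 * τ)]
      calc |τ * (e (k + 1) (j + 1) + e (k + 1) (j - 1) + e k (j + 1) + e k (j - 1)) +
            (2 * h ^ 2 - 2 * τ) * e k j + 2 * h ^ 2 * τ * Tr k j|
          ≤ |τ * (e (k + 1) (j + 1) + e (k + 1) (j - 1) + e k (j + 1) + e k (j - 1)) +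
              (2 * h ^ 2 - 2 * τ) * e k j| + |2 * h ^ 2 * τ * Tr k j| := abs_add_le _ _
        _ ≤ |τ * (e (k + 1) (j + 1) + e (k + 1) (j - 1) + e k (j + 1) + e k (j - 1))| +
              |(2 * h ^ 2 - 2 * τ) * e k j| + |2 * h ^ 2 * τ * Tr k j| := by
            gcongr; exact abs_add_le _ _
        _ ≤ _ := by linarith
    -- now deduce
    have hBnn : 0 ≤ |e (k + 1) j| := abs_nonneg _
    have hineq : (2 * h ^ 2 + 2 * τ + 2 * h ^ 2 * τ * p (k + 1)) * |e (k + 1) j| ≤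
        2 * τ * |e (k + 1) j| + 2 * h ^ 2 * S k + 2 * h ^ 2 * τ * (CT * (τ ^ 2 + h ^ 2)) := by
      have hB1 : |e (k + 1) (j + 1)| ≤ |e (k + 1) j| := hB ▸ ha1
      have hB2 : |e (k + 1) (j - 1)| ≤ |e (k + 1) j| := hB ▸ ha2
      nlinarith [hSnn k, mul_le_mul_of_nonneg_left hTr (le_of_lt (by positivity : (0:ℝ) < 2 * h ^ 2 * τ))]
    have hfin : (1 + τ * p (k + 1)) * |e (k + 1) j| ≤ S k + τ * (CT * (τ ^ 2 + h ^ 2)) := by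
      have h3 : 2 * h ^ 2 * ((1 + τ * p (k + 1)) * |e (k + 1) j|) ≤
          2 * h ^ 2 * (S k + τ * (CT * (τ ^ 2 + h ^ 2))) := by nlinarith [hineq]
      exact le_of_mul_le_mul_left h3 h2
    rw [hB]
    have h4 : |e (k + 1) j| ≤ (1 + τ * p (k + 1)) * |e (k + 1) j| :=
      le_mul_of_one_le_left hBnn (by linarith [mul_pos hτ hpk])
    exact h4.trans hfin
  have main : ∀ k ≤ M, S k ≤ CT * ((k : ℝ) * τ) * (τ ^ 2 + h ^ 2) := by
    intro k
    induction k with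
    | zero =>
      intro _
      have : S 0 ≤ 0 := by
        apply Finset.sup'_le
        intro i hi
        rw [hinit i (Nat.lt_succ_iff.mp (Finset.mem_range.mp hi)), abs_zero]
      simpa using this
    | succ k ih =>
      intro hk
      have hkM : k < M := by omega
      have ihk := ih (by omega)
      calc S (k + 1) ≤ S k + τ * (CT * (τ ^ 2 + h ^ 2)) := step k hkM
        _ ≤ CT * ((k : ℝ) * τ) * (τ ^ 2 + h ^ 2) + τ * (CT * (τ ^ 2 + h ^ 2)) := by linarith
        _ = CT * (((k : ℕ) + 1 : ℕ) * τ) * (τ ^ 2 + h ^ 2) := by push_cast; ring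
  refine ⟨main, ?_⟩
  intro hT k hk
  calc S k ≤ CT * ((k : ℝ) * τ) * (τ ^ 2 + h ^ 2) := main k hk
    _ ≤ CT * Tf * (τ ^ 2 + h ^ 2) := by
      have hkτ : (k : ℝ) * τ ≤ Tf := by
        have h1 : (k : ℝ) ≤ (M : ℝ) := Nat.cast_le.mpr hk
        have h2' : (k : ℝ) * τ ≤ (M : ℝ) * τ := mul_le_mul_of_nonneg_right h1 hτ.le
        exact h2'.trans hT
      gcongr
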